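/- Let m ≥ 2 and 2 ≤ n ≤ r be integers, let λ_1,…,λ_r ∈ ℤ satisfy gcd(λ_k, m) = 1 for 1 ≤ k ≤ n, and let α = (α_1,…,α_n) ∈ ℤⁿ. For each 1 ≤ i ≤ n let t_i be the unique integer in {0,…,m−1} with α_i + t_iλ_i ≡ 0 (mod m). Then the following are equivalent: (I) for every pair 1 ≤ i, j ≤ n with i ≠ j one has Σ_{1≤k≤n, k≠i,j} ⌊(α_k−1+t_iλ_k)/m⌋ + ⌊(α_i+t_iλ_i)/m⌋ + ⌊(α_j+t_iλ_j)/m⌋ + Σ_{k=n+1}^{r} ⌊t_iλ_k/m⌋ ≥ 0, and for every 1 ≤ i ≤ n one has Σ_{1≤k≤n, k≠i} ⌊(α_k−1+t_iλ_k)/m⌋ + ⌊(α_i+t_iλ_i)/m⌋ + Σ_{k=n+1}^{r} ⌊t_iλ_k/m⌋ < 0; (II) there exists a (necessarily unique) t ∈ {0,…,m−1} such that α_k + tλ_k ≡ 0 (mod m) for every 1 ≤ k ≤ n and Σ_{k=1}^{n} ⌈α_k/m⌉ + Σ_{k=1}^{r} ⌊tλ_k/m⌋ = n − 2. -/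

import Mathlib

open Finset

lemma flr_exact (m c : ℤ) (hm : 2 ≤ m) : ⌊((m*c:ℤ):ℚ)/(m:ℚ)⌋ = c := by
  have hm0 : ((m:ℚ)) ≠ 0 := by positivity
  push_cast
  rw [mul_comm, mul_div_assoc, div_self hm0, mul_one, Int.floor_intCast]

lemma flr_exact_sub_one (m c : ℤ) (hm : 2 ≤ m) : ⌊((m*c - 1:ℤ):ℚ)/(m:ℚ)⌋ = c - 1 := by
  have hm0 : (0:ℚ) < (m:ℚ) := by exact_mod_cast (by omega : (0:ℤ) < m)
  have hmm : (2:ℚ) ≤ (m:ℚ) := by exact_mod_cast hm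
  have : ((m*c - 1 : ℤ):ℚ)/(m:ℚ) = (-1)/(m:ℚ) + (c:ℚ) := by
    field_simp; push_cast; ring
  rw [this]
  rw [show ((c:ℚ)) = ((c:ℤ):ℚ) by norm_cast, Int.floor_add_intCast]
  have h1 : ⌊(-1:ℚ)/(m:ℚ)⌋ = -1 := by
    rw [Int.floor_eq_iff]
    constructor
    · push_cast
      rw [le_div_iff₀ hm0]
      nlinarith
    · push_cast
      rw [div_lt_iff₀ hm0]
      nlinarith
  omega

lemma flr_nondvd (m x : ℤ) (hm : 2 ≤ m) (h : ¬ m ∣ x) :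
    ⌊((x - 1:ℤ):ℚ)/(m:ℚ)⌋ = ⌊((x:ℤ):ℚ)/(m:ℚ)⌋ := by
  have hm0 : (0:ℚ) < (m:ℚ) := by exact_mod_cast (by omega : (0:ℤ) < m)
  set q := ⌊((x:ℤ):ℚ)/(m:ℚ)⌋ with hq
  have h1 : ((q:ℚ)) ≤ (x:ℚ)/(m:ℚ) := Int.floor_le _
  have h2 : (x:ℚ)/(m:ℚ) < (q:ℚ) + 1 := Int.lt_floor_add_one _
  have h1q : ((m*q : ℤ):ℚ) ≤ ((x:ℤ):ℚ) := by
    push_cast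
    nlinarith [(le_div_iff₀ hm0).mp h1]
  have h2q : ((x:ℤ):ℚ) < ((m*(q+1) : ℤ):ℚ) := by
    push_cast
    nlinarith [(div_lt_iff₀ hm0).mp h2]
  have h1' : m * q ≤ x := by exact_mod_cast h1q
  have h2' : x < m * (q + 1) := by exact_mod_cast h2q
  have hne : x ≠ m * q := fun he => h ⟨q, he⟩
  rw [Int.floor_eq_iff]
  constructor
  · rw [le_div_iff₀ hm0]
    have h3 : m * q + 1 ≤ x := by omega
    have : ((m*q+1 : ℤ):ℚ) ≤ ((x:ℤ):ℚ) := by exact_mod_cast h3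
    push_cast at this ⊢
    nlinarith
  · rw [div_lt_iff₀ hm0]
    have h4 : x - 1 < m * (q + 1) := by omega
    have : ((x - 1: ℤ):ℚ) < ((m*(q+1) : ℤ):ℚ) := by exact_mod_cast h4
    push_cast at this ⊢
    nlinarith

lemma ceil_key (m x y c : ℤ) (hm : 2 ≤ m) (h : x + y = m * c) :
    ⌈((x:ℤ):ℚ)/(m:ℚ)⌉ + ⌊((y:ℤ):ℚ)/(m:ℚ)⌋ = c := by
  have hm0 : ((m:ℚ)) ≠ 0 := by positivity
  have hx : x = m*c - y := by omega
  subst hx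
  have : ((m*c - y : ℤ):ℚ)/(m:ℚ) = -((y:ℚ)/(m:ℚ)) + ((c:ℤ):ℚ) := by
    push_cast; field_simp; ring
  rw [this, Int.ceil_add_intCast, Int.ceil_neg]
  omega

lemma dvd_sub_one_flr (m x : ℤ) (hm : 2 ≤ m) (h : m ∣ x) :
    ⌊((x:ℤ):ℚ)/(m:ℚ)⌋ = ⌊((x - 1:ℤ):ℚ)/(m:ℚ)⌋ + 1 := by
  obtain ⟨c, rfl⟩ := h
  rw [flr_exact m c hm, flr_exact_sub_one m c hm]
  omega

lemma cancel_cop (m x y c : ℤ) (hm : 2 ≤ m) (hc : Int.gcd c m = 1)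
    (hx : 0 ≤ x) (hx' : x ≤ m - 1) (hy : 0 ≤ y) (hy' : y ≤ m - 1)
    (h : m ∣ (x - y) * c) : x = y := by
  have hco : IsCoprime (m:ℤ) c := (Int.isCoprime_iff_gcd_eq_one.mpr hc).symm
  obtain ⟨d, hd⟩ := hco.dvd_of_dvd_mul_right h
  rcases lt_trichotomy d 0 with h' | h' | h'
  · nlinarith [mul_le_mul_of_nonneg_left (show d ≤ -1 by omega) (show (0:ℤ) ≤ m by omega)]
  · subst h'; simp at hd; omega
  · nlinarith [mul_le_mul_of_nonneg_left (show (1:ℤ) ≤ d by omega) (show (0:ℤ) ≤ m by omega)]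

lemma dvd_shift (m x u v c : ℤ) (h1 : m ∣ x + u * c) (h2 : m ∣ x + v * c) :
    m ∣ (u - v) * c := by
  have h := dvd_sub h1 h2
  have e : (x + u*c) - (x + v*c) = (u - v) * c := by ring
  rwa [e] at h

lemma keysum (m : ℤ) (hm : 2 ≤ m) (n r : ℕ) (hnr : n ≤ r)
    (lam : Fin r → ℤ) (a : Fin n → ℤ) (u : ℤ)
    (hu : ∀ k : Fin n, m ∣ a k + u * lam (Fin.castLE hnr k)) :
    (∑ k : Fin n, ⌈((a k : ℤ) : ℚ) / (m : ℚ)⌉)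
      + (∑ k : Fin r, ⌊((u * lam k : ℤ) : ℚ) / (m : ℚ)⌋)
    = (∑ k : Fin n, ⌊((a k - 1 + u * lam (Fin.castLE hnr k) : ℤ) : ℚ) / (m : ℚ)⌋)
      + (∑ k ∈ Finset.univ.filter (fun k : Fin r => n ≤ k.val),
          ⌊((u * lam k : ℤ) : ℚ) / (m : ℚ)⌋) + (n : ℤ) := by
  have hmap : Finset.univ.filter (fun k : Fin r => (k:ℕ) < n)
      = Finset.univ.map ⟨Fin.castLE hnr, Fin.castLE_injective hnr⟩ := by
    ext k
    simp only [Finset.mem_filter, Finset.mem_univ, true_and, Finset.mem_map,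
      Function.Embedding.coeFn_mk, Fin.ext_iff]
    constructor
    · intro h; exact ⟨⟨k.val, h⟩, rfl⟩
    · rintro ⟨j, hj⟩
      simp only [Fin.coe_castLE] at hj
      omega
  have hsplit : (∑ k : Fin r, ⌊((u * lam k : ℤ):ℚ)/(m:ℚ)⌋)
      = (∑ k : Fin n, ⌊((u * lam (Fin.castLE hnr k) : ℤ):ℚ)/(m:ℚ)⌋)
        + ∑ k ∈ Finset.univ.filter (fun k : Fin r => n ≤ k.val),
            ⌊((u * lam k : ℤ):ℚ)/(m:ℚ)⌋ := by
    rw [← Finset.sum_filter_add_sum_filter_not Finset.univ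
        (fun k : Fin r => (k:ℕ) < n) (fun k => ⌊((u * lam k : ℤ):ℚ)/(m:ℚ)⌋)]
    congr 1
    · rw [hmap, Finset.sum_map]
      rfl
    · apply Finset.sum_congr _ (fun _ _ => rfl)
      ext k
      simp [not_lt]
  have hterm : ∀ k : Fin n,
      ⌈((a k : ℤ):ℚ)/(m:ℚ)⌉ + ⌊((u * lam (Fin.castLE hnr k) : ℤ):ℚ)/(m:ℚ)⌋
      = ⌊((a k - 1 + u * lam (Fin.castLE hnr k) : ℤ):ℚ)/(m:ℚ)⌋ + 1 := by
    intro k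
    obtain ⟨c, hc⟩ := hu k
    have h1 := ceil_key m (a k) (u * lam (Fin.castLE hnr k)) c hm hc
    have h2 : a k - 1 + u * lam (Fin.castLE hnr k) = m * c - 1 := by omega
    rw [h2, flr_exact_sub_one m c hm]
    omega
  rw [hsplit, ← add_assoc, ← Finset.sum_add_distrib,
    Finset.sum_congr rfl (fun k _ => hterm k), Finset.sum_add_distrib]
  simp [Finset.card_univ, mul_comm]
  ring


/-- **Lemma 3.2 (arithmetic form).** Let `m ≥ 2`, `2 ≤ n ≤ r`, `λ : Fin r → ℤ` with
`gcd(λ_k, m) = 1` for the first `n` indices, and `α : Fin n → ℤ`. For each `i` let `t i`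
be the unique integer in `{0, …, m−1}` with `α_i + t_i λ_i ≡ 0 (mod m)`. Then condition (I)
(the displayed inequalities) holds iff there exists a (necessarily unique)
`u ∈ {0, …, m−1}` with `α_k + u λ_k ≡ 0 (mod m)` for all `k ≤ n` and
`Σ_{k=1}^n ⌈α_k/m⌉ + Σ_{k=1}^r ⌊u λ_k/m⌋ = n − 2`. -/
theorem stmt_2 (m : ℤ) (hm : 2 ≤ m) (n r : ℕ) (hn : 2 ≤ n) (hnr : n ≤ r)
    (lam : Fin r → ℤ) (hcop : ∀ k : Fin r, k.val < n → Int.gcd (lam k) m = 1)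
    (a : Fin n → ℤ) (t : Fin n → ℤ)
    (ht : ∀ i : Fin n, 0 ≤ t i ∧ t i ≤ m - 1 ∧ m ∣ a i + t i * lam (Fin.castLE hnr i)) :
    ((∀ i j : Fin n, i ≠ j →
        0 ≤ (∑ k ∈ (Finset.univ.erase i).erase j,
              ⌊((a k - 1 + t i * lam (Fin.castLE hnr k) : ℤ) : ℚ) / (m : ℚ)⌋)
          + ⌊((a i + t i * lam (Fin.castLE hnr i) : ℤ) : ℚ) / (m : ℚ)⌋
          + ⌊((a j + t i * lam (Fin.castLE hnr j) : ℤ) : ℚ) / (m : ℚ)⌋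
          + ∑ k ∈ Finset.univ.filter (fun k : Fin r => n ≤ k.val),
              ⌊((t i * lam k : ℤ) : ℚ) / (m : ℚ)⌋) ∧
      (∀ i : Fin n,
        (∑ k ∈ Finset.univ.erase i,
              ⌊((a k - 1 + t i * lam (Fin.castLE hnr k) : ℤ) : ℚ) / (m : ℚ)⌋)
          + ⌊((a i + t i * lam (Fin.castLE hnr i) : ℤ) : ℚ) / (m : ℚ)⌋
          + (∑ k ∈ Finset.univ.filter (fun k : Fin r => n ≤ k.val),
              ⌊((t i * lam k : ℤ) : ℚ) / (m : ℚ)⌋) < 0))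
    ↔ (∃! u : ℤ, 0 ≤ u ∧ u ≤ m - 1 ∧
        (∀ k : Fin n, m ∣ a k + u * lam (Fin.castLE hnr k)) ∧
        (∑ k : Fin n, ⌈((a k : ℤ) : ℚ) / (m : ℚ)⌉)
          + (∑ k : Fin r, ⌊((u * lam k : ℤ) : ℚ) / (m : ℚ)⌋) = (n : ℤ) - 2) := by
  -- abbreviations via haves
  have hgcd : ∀ k : Fin n, Int.gcd (lam (Fin.castLE hnr k)) m = 1 := fun k =>
    hcop (Fin.castLE hnr k) k.isLt
  -- exact term identity
  have eE : ∀ (i k : Fin n), m ∣ a k + t i * lam (Fin.castLE hnr k) →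
      ⌊((a k + t i * lam (Fin.castLE hnr k) : ℤ) : ℚ) / (m : ℚ)⌋
      = ⌊((a k - 1 + t i * lam (Fin.castLE hnr k) : ℤ) : ℚ) / (m : ℚ)⌋ + 1 := by
    intro i k hd
    have h := dvd_sub_one_flr m _ hm hd
    rwa [show a k + t i * lam (Fin.castLE hnr k) - 1
        = a k - 1 + t i * lam (Fin.castLE hnr k) from by ring] at h
  have teq_of_dvd : ∀ i k : Fin n, m ∣ a k + t i * lam (Fin.castLE hnr k) → t i = t k := by
    intro i k hd
    exact cancel_cop m (t i) (t k) _ hm (hgcd k) (ht i).1 (ht i).2.1 (ht k).1 (ht k).2.1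
      (dvd_shift m (a k) (t i) (t k) _ hd (ht k).2.2)
  constructor
  · rintro ⟨hI1, hI2⟩
    -- G(t i) + 1 < 0
    have hGlt : ∀ i : Fin n,
        (∑ k : Fin n, ⌊((a k - 1 + t i * lam (Fin.castLE hnr k) : ℤ) : ℚ) / (m : ℚ)⌋)
        + (∑ k ∈ Finset.univ.filter (fun k : Fin r => n ≤ k.val),
            ⌊((t i * lam k : ℤ) : ℚ) / (m : ℚ)⌋) + 1 < 0 := by
      intro i
      have h2 := hI2 i
      have e1 := eE i i (ht i).2.2
      have e2 := Finset.sum_erase_add Finset.univ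
        (fun k => ⌊((a k - 1 + t i * lam (Fin.castLE hnr k) : ℤ) : ℚ) / (m : ℚ)⌋)
        (Finset.mem_univ i)
      linarith
    -- all t equal
    have teq : ∀ i j : Fin n, i ≠ j → t i = t j := by
      intro i j hij
      by_contra hne
      have hnd : ¬ m ∣ a j + t i * lam (Fin.castLE hnr j) := fun h => hne (teq_of_dvd i j h)
      have e3 := flr_nondvd m (a j + t i * lam (Fin.castLE hnr j)) hm hnd
      rw [show a j + t i * lam (Fin.castLE hnr j) - 1
          = a j - 1 + t i * lam (Fin.castLE hnr j) from by ring] at e3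
      have h1 := hI1 i j hij
      have e1 := eE i i (ht i).2.2
      have e4 := Finset.sum_erase_add (Finset.univ.erase i)
        (fun k => ⌊((a k - 1 + t i * lam (Fin.castLE hnr k) : ℤ) : ℚ) / (m : ℚ)⌋)
        (Finset.mem_erase.mpr ⟨Ne.symm hij, Finset.mem_univ j⟩)
      have e2 := Finset.sum_erase_add Finset.univ
        (fun k => ⌊((a k - 1 + t i * lam (Fin.castLE hnr k) : ℤ) : ℚ) / (m : ℚ)⌋)
        (Finset.mem_univ i)
      have := hGlt i
      linarith
    -- the common value
    set i0 : Fin n := ⟨0, by omega⟩ with hi0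
    set j0 : Fin n := ⟨1, by omega⟩ with hj0
    have hij0 : i0 ≠ j0 := Fin.ne_of_val_ne (by norm_num)
    have tall : ∀ k : Fin n, t k = t i0 := by
      intro k
      by_cases h : k = i0
      · rw [h]
      · exact teq k i0 h
    have hdvdall : ∀ k : Fin n, m ∣ a k + t i0 * lam (Fin.castLE hnr k) := by
      intro k
      rw [← tall k]
      exact (ht k).2.2
    -- G(t i0) = -2
    have hGeq :
        (∑ k : Fin n, ⌊((a k - 1 + t i0 * lam (Fin.castLE hnr k) : ℤ) : ℚ) / (m : ℚ)⌋)
        + (∑ k ∈ Finset.univ.filter (fun k : Fin r => n ≤ k.val),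
            ⌊((t i0 * lam k : ℤ) : ℚ) / (m : ℚ)⌋) = -2 := by
      have h1 := hI1 i0 j0 hij0
      have e1 := eE i0 i0 (ht i0).2.2
      have e5 := eE i0 j0 (hdvdall j0)
      have e4 := Finset.sum_erase_add (Finset.univ.erase i0)
        (fun k => ⌊((a k - 1 + t i0 * lam (Fin.castLE hnr k) : ℤ) : ℚ) / (m : ℚ)⌋)
        (Finset.mem_erase.mpr ⟨Ne.symm hij0, Finset.mem_univ j0⟩)
      have e2 := Finset.sum_erase_add Finset.univ
        (fun k => ⌊((a k - 1 + t i0 * lam (Fin.castLE hnr k) : ℤ) : ℚ) / (m : ℚ)⌋)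
        (Finset.mem_univ i0)
      have := hGlt i0
      linarith
    refine ⟨t i0, ⟨(ht i0).1, (ht i0).2.1, hdvdall, ?_⟩, ?_⟩
    · rw [keysum m hm n r hnr lam a (t i0) hdvdall]
      linarith
    · rintro u' ⟨h0, h1, hdvd', -⟩
      exact cancel_cop m u' (t i0) _ hm (hgcd i0) h0 h1 (ht i0).1 (ht i0).2.1
        (dvd_shift m (a i0) u' (t i0) _ (hdvd' i0) ((ht i0).2.2))
  · rintro ⟨u, ⟨hu0, hu1, hudvd, husum⟩, -⟩
    have tequ : ∀ i : Fin n, t i = u := by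
      intro i
      exact cancel_cop m (t i) u _ hm (hgcd i) (ht i).1 (ht i).2.1 hu0 hu1
        (dvd_shift m (a i) (t i) u _ ((ht i).2.2) (hudvd i))
    have hsum :
        (∑ k : Fin n, ⌊((a k - 1 + u * lam (Fin.castLE hnr k) : ℤ) : ℚ) / (m : ℚ)⌋)
        + (∑ k ∈ Finset.univ.filter (fun k : Fin r => n ≤ k.val),
            ⌊((u * lam k : ℤ) : ℚ) / (m : ℚ)⌋) = -2 := by
      have := keysum m hm n r hnr lam a u hudvd
      linarith
    have eEu : ∀ k : Fin n,
        ⌊((a k + u * lam (Fin.castLE hnr k) : ℤ) : ℚ) / (m : ℚ)⌋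
        = ⌊((a k - 1 + u * lam (Fin.castLE hnr k) : ℤ) : ℚ) / (m : ℚ)⌋ + 1 := by
      intro k
      have h := dvd_sub_one_flr m _ hm (hudvd k)
      rwa [show a k + u * lam (Fin.castLE hnr k) - 1
          = a k - 1 + u * lam (Fin.castLE hnr k) from by ring] at h
    constructor
    · intro i j hij
      rw [tequ i]
      have e1 := eEu i
      have e5 := eEu j
      have e4 := Finset.sum_erase_add (Finset.univ.erase i)
        (fun k => ⌊((a k - 1 + u * lam (Fin.castLE hnr k) : ℤ) : ℚ) / (m : ℚ)⌋)
        (Finset.mem_erase.mpr ⟨Ne.symm hij, Finset.mem_univ j⟩)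
      have e2 := Finset.sum_erase_add Finset.univ
        (fun k => ⌊((a k - 1 + u * lam (Fin.castLE hnr k) : ℤ) : ℚ) / (m : ℚ)⌋)
        (Finset.mem_univ i)
      linarith
    · intro i
      rw [tequ i]
      have e1 := eEu i
      have e2 := Finset.sum_erase_add Finset.univ
        (fun k => ⌊((a k - 1 + u * lam (Fin.castLE hnr k) : ℤ) : ℚ) / (m : ℚ)⌋)
        (Finset.mem_univ i)
      linarith
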